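/- The cyclic configuration-space integral of products of the sawtooth propagator computes zeta values: for k ≥ 2, ∫_{[0,1]^{k−1}} P(t₁)P(t₂)⋯P(t_{k−1})P(−t₁−t₂−⋯−t_{k−1}) dt₁⋯dt_{k−1} = ∑_{n≠0} 1/(2πin)^k = 2ζ(k)/(2πi)^k for even k, and 0 for odd k, where P(t) = t − 1/2 for 0 < t < 1 extended 1-periodically (and P = sawtooth with mean zero). -/

import Mathlib

/-!
Statement 14: The cyclic configuration-space integral of products of the
1-periodic sawtooth propagator P (with P(t) = t − 1/2 on (0,1)) computes zeta
values: for k ≥ 2,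
∫_{[0,1]^{k−1}} P(t₁)⋯P(t_{k−1}) P(−t₁−⋯−t_{k−1}) dt = ∑_{n≠0} 1/(2πin)^k,
which equals 2ζ(k)/(2πi)^k for even k and 0 for odd k.
-/

open MeasureTheory

noncomputable section

/-- The 1-periodic sawtooth propagator, `P(t) = t − 1/2` for `t ∈ (0,1)`,
extended 1-periodically (values on measure-zero sets are irrelevant). -/
def saw (t : ℝ) : ℝ := Int.fract t - 1 / 2

namespace WheelAux

open Complex Real Set

/-- Lebesgue measure restricted to `[0,1]`. -/
def ν : Measure ℝ := volume.restrict (Set.Icc 0 1)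

/-- The product measure on the cube. -/
def μn (n : ℕ) : Measure (Fin n → ℝ) := Measure.pi fun _ => ν

/-- Fourier coefficient of the sawtooth. -/
def c (n : ℤ) : ℂ := if n = 0 then 0 else -1 / (2 * π * Complex.I * n)

/-- Exponential character. -/
def fexp (n : ℤ) (x : ℝ) : ℂ := Complex.exp (2 * π * Complex.I * n * x)

/-- Fourier series of the `K`-fold cyclic convolution of `saw`. -/
def g (K : ℕ) (x : ℝ) : ℂ := ∑' n : ℤ, c n ^ K * fexp n x

lemma abs_saw_le (t : ℝ) : |saw t| ≤ 1 / 2 := by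
  rw [abs_le]
  have h1 := Int.fract_nonneg t
  have h2 := Int.fract_lt_one t
  constructor <;> simp [saw] <;> linarith

lemma measurable_saw : Measurable saw :=
  measurable_fract.sub measurable_const

lemma norm_fexp (n : ℤ) (x : ℝ) : ‖fexp n x‖ = 1 := by
  have : (2 * (π:ℂ) * Complex.I * n * x) = ((2 * π * n * x : ℝ) : ℂ) * Complex.I := by
    push_cast; ring
  rw [fexp, this, Complex.norm_exp_ofReal_mul_I]

lemma norm_c_pow_le (n : ℤ) (K : ℕ) : ‖c n ^ K‖ ≤ |1 / (n:ℝ) ^ K| := by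
  rcases eq_or_ne n 0 with rfl | hn
  · rcases Nat.eq_zero_or_pos K with rfl | hK
    · simp [c]
    · simp [c, zero_pow hK.ne', abs_nonneg]
  · have hn' : (1:ℝ) ≤ |(n:ℝ)| := by
      rw [← Int.cast_abs]; exact_mod_cast Int.one_le_abs hn
    have hc : ‖c n‖ = 1 / (2 * π * |(n:ℝ)|) := by
      simp only [c, if_neg hn]
      rw [norm_div, norm_neg, norm_one]
      congr 1
      simp [Complex.norm_real, Complex.norm_intCast,
        abs_of_pos Real.pi_pos]
    have h2 : |1 / (n:ℝ)^K| = 1/|(n:ℝ)|^K := by rw [abs_div, abs_one, _root_.abs_pow]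
    rw [norm_pow, hc, h2, div_pow, one_pow]
    apply one_div_le_one_div_of_le (by positivity)
    apply pow_le_pow_left₀ (abs_nonneg _)
    nlinarith [Real.pi_gt_three, abs_nonneg ((n:ℝ))]

lemma summable_norm_c_pow {K : ℕ} (hK : 2 ≤ K) : Summable fun n : ℤ => ‖c n ^ K‖ := by
  apply Summable.of_nonneg_of_le (fun n => norm_nonneg _) (fun n => norm_c_pow_le n K)
  exact (summable_one_div_int_pow.mpr (by omega)).abs

instance : IsProbabilityMeasure ν := by
  constructor
  rw [ν, Measure.restrict_apply_univ, Real.volume_Icc]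
  norm_num

instance (n : ℕ) : IsProbabilityMeasure (μn n) := by
  rw [μn]; infer_instance

lemma two_pi_I_int_ne (n : ℤ) (hn : n ≠ 0) : 2 * (π:ℂ) * Complex.I * n ≠ 0 := by
  simp [Real.pi_ne_zero, Complex.I_ne_zero, hn]

lemma exp_two_pi_I_int (n : ℤ) : Complex.exp (2 * (π:ℂ) * Complex.I * n) = 1 := by
  rw [show 2 * (π:ℂ) * Complex.I * n = n * (2 * π * Complex.I) by ring]
  exact Complex.exp_int_mul_two_pi_mul_I n

/-- Key single-mode integral: Fourier coefficient of the sawtooth. -/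
lemma integral_saw_fexp (n : ℤ) (x : ℝ) :
    ∫ t, (saw t : ℂ) * fexp n (x - t) ∂ν = c n * fexp n x := by
  have hIcc : ∫ t, (saw t : ℂ) * fexp n (x - t) ∂ν
      = ∫ t in (0:ℝ)..1, (saw t : ℂ) * fexp n (x - t) := by
    rw [ν, intervalIntegral.integral_of_le zero_le_one, integral_Icc_eq_integral_Ioc]
  rw [hIcc]
  have hae : ∫ t in (0:ℝ)..1, (saw t : ℂ) * fexp n (x - t)
      = ∫ t in (0:ℝ)..1, ((t:ℂ) - 1/2) * fexp n (x - t) := by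
    apply intervalIntegral.integral_congr_ae
    have h1 : ∀ᵐ t : ℝ, t ≠ 1 := by
      refine ae_iff.mpr ?_
      simp only [not_not, Set.setOf_eq_eq_singleton]
      exact measure_singleton 1
    filter_upwards [h1] with t ht htm
    rw [Set.uIoc_of_le zero_le_one] at htm
    have : Int.fract t = t := Int.fract_eq_self.mpr ⟨le_of_lt htm.1, lt_of_le_of_ne htm.2 ht⟩
    simp [saw, this]
  rw [hae]
  rcases eq_or_ne n 0 with rfl | hn
  · have : ∀ t : ℝ, fexp 0 (x - t) = 1 := by intro t; simp [fexp]
    simp only [this, mul_one, c, if_pos rfl, zero_mul]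
    have : ∀ t : ℝ, (t:ℂ) - 1/2 = ((t - 1/2 : ℝ) : ℂ) := by intro t; push_cast; ring
    simp only [this]
    rw [intervalIntegral.integral_ofReal]
    norm_num
  · set b : ℂ := -(2 * π * Complex.I * n) with hb
    have hbne : b ≠ 0 := neg_ne_zero.mpr (two_pi_I_int_ne n hn)
    have hsplit : ∀ t : ℝ, fexp n (x - t) = fexp n x * Complex.exp (b * t) := by
      intro t
      rw [fexp, fexp, ← Complex.exp_add]
      congr 1
      push_cast
      ring
    simp only [hsplit]
    have hre : ∀ t : ℝ, ((t:ℂ) - 1/2) * (fexp n x * Complex.exp (b * t))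
        = fexp n x * (((t:ℂ) - 1/2) * Complex.exp (b * t)) := by intro t; ring
    simp only [hre]
    rw [intervalIntegral.integral_const_mul]
    have hkey : ∫ t in (0:ℝ)..1, ((t:ℂ) - 1/2) * Complex.exp (b * t) = 1 / b := by
      have hF : ∀ t : ℝ, HasDerivAt (fun s : ℝ => ((s:ℂ) - 1/2) * Complex.exp (b * s) / b
          - Complex.exp (b * s) / b ^ 2) (((t:ℂ) - 1/2) * Complex.exp (b * t)) t := by
        intro t
        have hC : HasDerivAt (fun w : ℂ => (w - 1/2) * Complex.exp (b * w) / b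
            - Complex.exp (b * w) / b ^ 2) (((t:ℂ) - 1/2) * Complex.exp (b * t)) (t : ℂ) := by
          have he : HasDerivAt (fun w : ℂ => Complex.exp (b * w))
              (Complex.exp (b * t) * b) (t : ℂ) := by
            simpa using (((hasDerivAt_id (t:ℂ)).const_mul b).cexp)
          have h1 : HasDerivAt (fun w : ℂ => (w - 1/2) * Complex.exp (b * w) / b)
              ((1 * Complex.exp (b * t) + ((t:ℂ) - 1/2) * (Complex.exp (b * t) * b)) / b)
              (t : ℂ) := (((hasDerivAt_id (t:ℂ)).sub_const (1/2)).mul he).div_const b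
          have h2 : HasDerivAt (fun w : ℂ => Complex.exp (b * w) / b ^ 2)
              ((Complex.exp (b * t) * b) / b ^ 2) (t : ℂ) := he.div_const (b ^ 2)
          refine (h1.sub h2).congr_deriv ?_
          rw [div_sub_div _ _ hbne (pow_ne_zero 2 hbne), div_eq_iff (mul_ne_zero hbne (pow_ne_zero 2 hbne))]
          ring
        exact hC.comp_ofReal
      rw [intervalIntegral.integral_eq_sub_of_hasDerivAt (fun t _ => hF t)]
      · have hexpb : Complex.exp b = 1 := by
          rw [hb]
          rw [show -(2 * (π:ℂ) * Complex.I * n) = 2 * (π:ℂ) * Complex.I * (-n : ℤ) by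
            push_cast; ring]
          exact exp_two_pi_I_int (-n)
        simp only [Complex.ofReal_one, Complex.ofReal_zero, mul_one, mul_zero,
          Complex.exp_zero, hexpb]
        field_simp
        ring
      · apply Continuous.intervalIntegrable
        fun_prop
    rw [hkey, c, if_neg hn, hb]
    ring

lemma norm_term (K : ℕ) (n : ℤ) (x : ℝ) : ‖c n ^ K * fexp n x‖ = ‖c n ^ K‖ := by
  rw [norm_mul, norm_fexp, mul_one]

lemma continuous_g {K : ℕ} (hK : 2 ≤ K) : Continuous (g K) := by
  apply continuous_tsum
  · intro n
    apply continuous_const.mul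
    unfold fexp
    fun_prop
  · exact summable_norm_c_pow hK
  · intro n x; rw [norm_term]

lemma norm_g_le {K : ℕ} (hK : 2 ≤ K) (x : ℝ) : ‖g K x‖ ≤ ∑' n : ℤ, ‖c n ^ K‖ := by
  have hs : Summable fun n : ℤ => ‖c n ^ K * fexp n x‖ := by
    apply Summable.congr (summable_norm_c_pow hK)
    intro n; rw [norm_term]
  calc ‖g K x‖ ≤ ∑' n : ℤ, ‖c n ^ K * fexp n x‖ := norm_tsum_le_tsum_norm hs
    _ = ∑' n : ℤ, ‖c n ^ K‖ := tsum_congr fun n => norm_term K n x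

lemma integrable_term (K : ℕ) (n : ℤ) (x : ℝ) :
    Integrable (fun u : ℝ => (saw u : ℂ) * (c n ^ K * fexp n (x - u))) ν := by
  have hm : Measurable fun u : ℝ => (saw u : ℂ) * (c n ^ K * fexp n (x - u)) := by
    apply (Complex.measurable_ofReal.comp measurable_saw).mul
    apply measurable_const.mul
    unfold fexp
    fun_prop
  refine Integrable.mono' (integrable_const ‖c n ^ K‖) hm.aestronglyMeasurable ?_
  filter_upwards with u
  rw [norm_mul, norm_term]
  calc ‖((saw u : ℝ) : ℂ)‖ * ‖c n ^ K‖ ≤ 1 * ‖c n ^ K‖ := by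
        apply mul_le_mul_of_nonneg_right _ (norm_nonneg _)
        rw [Complex.norm_real, Real.norm_eq_abs]
        linarith [abs_saw_le u]
    _ = ‖c n ^ K‖ := one_mul _

/-- Convolving once more with the sawtooth raises the index. -/
lemma integral_saw_g {K : ℕ} (hK : 2 ≤ K) (x : ℝ) :
    ∫ u, (saw u : ℂ) * g K (x - u) ∂ν = g (K + 1) x := by
  have hpt : ∀ u : ℝ, (saw u : ℂ) * g K (x - u)
      = ∑' n : ℤ, (saw u : ℂ) * (c n ^ K * fexp n (x - u)) := by
    intro u; rw [g, ← tsum_mul_left]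
  simp only [hpt]
  rw [← MeasureTheory.integral_tsum_of_summable_integral_norm (integrable_term K · x) ?_]
  · rw [g]
    apply tsum_congr
    intro n
    have hc : ∀ u : ℝ, (saw u : ℂ) * (c n ^ K * fexp n (x - u))
        = c n ^ K * ((saw u : ℂ) * fexp n (x - u)) := fun u => by ring
    simp only [hc]
    rw [MeasureTheory.integral_const_mul, integral_saw_fexp n x, pow_succ]
    ring
  · apply Summable.of_nonneg_of_le (fun n => integral_nonneg fun u => norm_nonneg _)
      (fun n => ?_) (summable_norm_c_pow hK)
    calc ∫ u, ‖(saw u : ℂ) * (c n ^ K * fexp n (x - u))‖ ∂ν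
        ≤ ∫ _u, ‖c n ^ K‖ ∂ν := by
          apply integral_mono ((integrable_term K n x).norm) (integrable_const _)
          intro u
          show ‖(saw u : ℂ) * (c n ^ K * fexp n (x - u))‖ ≤ ‖c n ^ K‖
          rw [norm_mul, norm_term]
          calc ‖((saw u : ℝ) : ℂ)‖ * ‖c n ^ K‖ ≤ 1 * ‖c n ^ K‖ := by
                apply mul_le_mul_of_nonneg_right _ (norm_nonneg _)
                rw [Complex.norm_real, Real.norm_eq_abs]
                linarith [abs_saw_le u]
            _ = ‖c n ^ K‖ := one_mul _
      _ = ‖c n ^ K‖ := by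
          rw [MeasureTheory.integral_const, probReal_univ, one_smul]

lemma saw_conv_saw {x : ℝ} (hx : x ∈ Set.Ico (0:ℝ) 1) :
    ∫ u, saw u * saw (x - u) ∂ν = -(x ^ 2 - x + 1/6) / 2 := by
  obtain ⟨hx0, hx1⟩ := hx
  have hfm : Measurable fun u : ℝ => saw u * saw (x - u) :=
    measurable_saw.mul (measurable_saw.comp (measurable_const.sub measurable_id))
  have hint : ∀ a b : ℝ, IntervalIntegrable (fun u => saw u * saw (x - u)) volume a b := by
    intro a b
    rw [intervalIntegrable_iff]
    haveI : IsFiniteMeasure (volume.restrict (Set.uIoc a b)) := by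
      constructor
      rw [Measure.restrict_apply_univ, Set.uIoc]
      exact measure_Ioc_lt_top
    refine Integrable.mono' (integrable_const (1/4 : ℝ)) hfm.aestronglyMeasurable ?_
    filter_upwards with u
    rw [Real.norm_eq_abs, abs_mul]
    calc |saw u| * |saw (x - u)| ≤ (1/2) * (1/2) :=
          mul_le_mul (abs_saw_le u) (abs_saw_le (x - u)) (abs_nonneg _) (by norm_num)
      _ = 1/4 := by norm_num
  have h0 : ∫ u, saw u * saw (x - u) ∂ν = ∫ u in (0:ℝ)..1, saw u * saw (x - u) := by
    rw [ν, intervalIntegral.integral_of_le zero_le_one, integral_Icc_eq_integral_Ioc]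
  rw [h0, ← intervalIntegral.integral_add_adjacent_intervals (hint 0 x) (hint x 1)]
  have hp1 : ∫ u in (0:ℝ)..x, saw u * saw (x - u)
      = ∫ u in (0:ℝ)..x, (u - 1/2) * ((x - u) - 1/2) := by
    apply intervalIntegral.integral_congr
    intro u hu
    rw [Set.uIcc_of_le hx0] at hu
    obtain ⟨hu0, hux⟩ := hu
    simp only [saw]
    rw [Int.fract_eq_self.mpr ⟨hu0, lt_of_le_of_lt hux hx1⟩,
      Int.fract_eq_self.mpr ⟨by linarith, by linarith⟩]
  have hp2 : ∫ u in x..(1:ℝ), saw u * saw (x - u)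
      = ∫ u in x..(1:ℝ), (u - 1/2) * ((x - u + 1) - 1/2) := by
    apply intervalIntegral.integral_congr_ae
    have h1 : ∀ᵐ t : ℝ, t ≠ 1 := by
      refine ae_iff.mpr ?_
      simp only [not_not, Set.setOf_eq_eq_singleton]
      exact measure_singleton 1
    filter_upwards [h1] with u hu1 hum
    rw [Set.uIoc_of_le hx1.le] at hum
    obtain ⟨hxu, hu1'⟩ := hum
    have hfr : Int.fract (x - u) = x - u + 1 := by
      have : Int.fract (x - u + (1:ℤ)) = Int.fract (x - u) := Int.fract_add_intCast _ _
      rw [← this]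
      push_cast
      rw [Int.fract_eq_self.mpr ⟨by linarith, by linarith⟩]
    simp only [saw]
    rw [hfr, Int.fract_eq_self.mpr ⟨by linarith, lt_of_le_of_ne hu1' hu1⟩]
  have hv1 : ∫ u in (0:ℝ)..x, (u - 1/2) * ((x - u) - 1/2)
      = x^3/6 - x^2/2 + x/4 := by
    have hF : ∀ u : ℝ, HasDerivAt (fun u : ℝ => x * u ^ 2 / 2 - u ^ 3 / 3 - x * u / 2 + u / 4)
        ((u - 1/2) * ((x - u) - 1/2)) u := by
      intro u
      have h := ((((hasDerivAt_pow 2 u).const_mul x).div_const 2).sub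
        ((hasDerivAt_pow 3 u).div_const 3)).sub
        (((hasDerivAt_id u).const_mul x).div_const 2) |>.add ((hasDerivAt_id u).div_const 4)
      refine h.congr_deriv ?_
      simp only [Nat.cast_ofNat, pow_one]
      ring
    rw [intervalIntegral.integral_eq_sub_of_hasDerivAt (fun u _ => hF u)
      (Continuous.intervalIntegrable (by fun_prop) _ _)]
    ring
  have hv2 : ∫ u in x..(1:ℝ), (u - 1/2) * ((x - u + 1) - 1/2)
      = -1/12 - x^3/6 + x/4 := by
    have hF : ∀ u : ℝ, HasDerivAt
        (fun u : ℝ => x * u ^ 2 / 2 - u ^ 3 / 3 + u ^ 2 / 2 - x * u / 2 - u / 4)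
        ((u - 1/2) * ((x - u + 1) - 1/2)) u := by
      intro u
      have h := (((((hasDerivAt_pow 2 u).const_mul x).div_const 2).sub
        ((hasDerivAt_pow 3 u).div_const 3)).add
        ((hasDerivAt_pow 2 u).div_const 2)).sub
        (((hasDerivAt_id u).const_mul x).div_const 2) |>.sub ((hasDerivAt_id u).div_const 4)
      refine h.congr_deriv ?_
      simp only [Nat.cast_ofNat, pow_one]
      ring
    rw [intervalIntegral.integral_eq_sub_of_hasDerivAt (fun u _ => hF u)
      (Continuous.intervalIntegrable (by fun_prop) _ _)]
    ring
  rw [hp1, hp2, hv1, hv2]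
  ring

lemma bernoulliFun_two (y : ℝ) : bernoulliFun 2 y = y ^ 2 - y + 1/6 := by
  have h2 : bernoulli 2 = 1/6 := by
    rw [bernoulli_eq_bernoulli'_of_ne_one (by norm_num), bernoulli'_two]
  simp [bernoulliFun, Polynomial.bernoulli, Finset.sum_range_succ, bernoulli_zero,
    bernoulli_one, h2]
  push_cast
  ring

lemma g_two_eq {y : ℝ} (hy : y ∈ Set.Icc (0:ℝ) 1) :
    g 2 y = ((-(y ^ 2 - y + 1/6) / 2 : ℝ) : ℂ) := by
  have H := hasSum_one_div_pow_mul_fourier_mul_bernoulliFun (le_refl 2) hy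
  have H2 := H.mul_left ((1 / (2 * (π:ℂ) * Complex.I)) ^ 2)
  have hfun : (fun n : ℤ => (1 / (2 * (π:ℂ) * Complex.I)) ^ 2
      * (1 / (n:ℂ) ^ 2 * fourier n (y : UnitAddCircle)))
      = fun n : ℤ => c n ^ 2 * fexp n y := by
    funext n
    have hfour : (fourier n (y : UnitAddCircle) : ℂ) = fexp n y := by
      rw [fourier_coe_apply, fexp]
      norm_num
    rcases eq_or_ne n 0 with rfl | hn
    · simp [c]
    · rw [hfour, c, if_neg hn]
      have : ((n:ℂ)) ≠ 0 := Int.cast_ne_zero.mpr hn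
      field_simp
  rw [hfun] at H2
  rw [g, H2.tsum_eq]
  have hpi := two_pi_I_ne_zero
  rw [bernoulliFun_two]
  push_cast
  field_simp
  ring

lemma conv_complex (x : ℝ) : ∫ u, (saw u : ℂ) * (saw (x - u) : ℂ) ∂ν = g 2 x := by
  obtain ⟨y, m, hy, rfl⟩ : ∃ (y : ℝ) (m : ℤ), y ∈ Set.Ico (0:ℝ) 1 ∧ x = y + m := by
    refine ⟨Int.fract x, ⌊x⌋, ⟨Int.fract_nonneg x, Int.fract_lt_one x⟩, ?_⟩
    rw [Int.fract]
    ring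
  have h1 : ∀ u : ℝ, saw (y + (m:ℝ) - u) = saw (y - u) := by
    intro u
    simp only [saw]
    rw [show y + (m:ℝ) - u = (y - u) + (m:ℝ) by ring, Int.fract_add_intCast]
  have h2 : g 2 (y + (m:ℝ)) = g 2 y := by
    rw [g, g]
    apply tsum_congr
    intro n
    congr 1
    rw [fexp, fexp, show (2 * (π:ℂ) * Complex.I * n * ((y:ℝ) + (m:ℝ) : ℝ) : ℂ)
      = 2 * π * Complex.I * n * y + 2 * π * Complex.I * ((n * m : ℤ) : ℂ) by push_cast; ring,
      Complex.exp_add, exp_two_pi_I_int, mul_one]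
  simp only [h1, h2]
  have hcast : ∀ u : ℝ, (saw u : ℂ) * (saw (y - u) : ℂ) = ((saw u * saw (y - u) : ℝ) : ℂ) := by
    intro u; push_cast; ring
  simp only [hcast]
  rw [show ∫ u, ((saw u * saw (y - u) : ℝ) : ℂ) ∂ν = ((∫ u, saw u * saw (y - u) ∂ν : ℝ) : ℂ)
    from integral_ofReal, saw_conv_saw hy, g_two_eq ⟨hy.1, hy.2.le⟩]

lemma measurable_prodsaw (n : ℕ) {F : ℝ → ℂ} (hF : Measurable F) (x : ℝ) :
    Measurable fun t : Fin n → ℝ => (∏ i, (saw (t i) : ℂ)) * F (x - ∑ i, t i) := by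
  apply Measurable.mul
  · apply Finset.measurable_prod
    intro i _
    exact Complex.measurable_ofReal.comp (measurable_saw.comp (measurable_pi_apply i))
  · exact hF.comp (measurable_const.sub (Finset.measurable_sum _ fun i _ => measurable_pi_apply i))

lemma norm_prodsaw_le (n : ℕ) {F : ℝ → ℂ} {C : ℝ} (hC : ∀ y, ‖F y‖ ≤ C)
    (x : ℝ) (t : Fin n → ℝ) : ‖(∏ i, (saw (t i) : ℂ)) * F (x - ∑ i, t i)‖ ≤ C := by
  have hC0 : 0 ≤ C := le_trans (norm_nonneg _) (hC 0)
  rw [norm_mul]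
  calc ‖∏ i, ((saw (t i) : ℝ) : ℂ)‖ * ‖F (x - ∑ i, t i)‖ ≤ 1 * C := by
        apply mul_le_mul _ (hC _) (norm_nonneg _) zero_le_one
        rw [norm_prod]
        calc ∏ i, ‖((saw (t i) : ℝ) : ℂ)‖ ≤ ∏ _i : Fin n, 1 := by
              apply Finset.prod_le_prod (fun i _ => norm_nonneg _)
              intro i _
              rw [Complex.norm_real, Real.norm_eq_abs]
              linarith [abs_saw_le (t i)]
          _ = 1 := Finset.prod_const_one
    _ = C := one_mul _

lemma integrable_prodsaw (n : ℕ) {F : ℝ → ℂ} (hF : Measurable F) {C : ℝ}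
    (hC : ∀ y, ‖F y‖ ≤ C) (x : ℝ) :
    Integrable (fun t : Fin n → ℝ => (∏ i, (saw (t i) : ℂ)) * F (x - ∑ i, t i)) (μn n) :=
  Integrable.mono' (integrable_const C) (measurable_prodsaw n hF x).aestronglyMeasurable
    (Filter.Eventually.of_forall fun t => norm_prodsaw_le n hC x t)

/-- Peeling off one coordinate of the cube integral. -/
lemma peel (n : ℕ) {F : ℝ → ℂ} (hF : Measurable F) {C : ℝ} (hC : ∀ y, ‖F y‖ ≤ C) (x : ℝ) :
    ∫ t, (∏ i, (saw (t i) : ℂ)) * F (x - ∑ i, t i) ∂μn (n + 1)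
      = ∫ u, (saw u : ℂ) *
          ∫ s, (∏ i, (saw (s i) : ℂ)) * F ((x - u) - ∑ i, s i) ∂μn n ∂ν := by
  have mp : MeasurePreserving
      (MeasurableEquiv.piFinSuccAbove (fun _ : Fin (n + 1) => ℝ) 0)
      (μn (n + 1)) (ν.prod (μn n)) :=
    measurePreserving_piFinSuccAbove (fun _ : Fin (n + 1) => ν) 0
  set e := MeasurableEquiv.piFinSuccAbove (fun _ : Fin (n + 1) => ℝ) 0 with he
  have hcomp : ∫ t, (∏ i, (saw (t i) : ℂ)) * F (x - ∑ i, t i) ∂μn (n + 1)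
      = ∫ p : ℝ × (Fin n → ℝ),
          (∏ i, (saw (e.symm p i) : ℂ)) * F (x - ∑ i, e.symm p i) ∂(ν.prod (μn n)) := by
    rw [← (mp.symm e).integral_comp e.symm.measurableEmbedding
      (fun t => (∏ i, (saw (t i) : ℂ)) * F (x - ∑ i, t i))]
  rw [hcomp]
  have hsymm : ∀ (u : ℝ) (s : Fin n → ℝ), e.symm (u, s) = Fin.insertNth 0 u s := by
    intro u s
    rfl
  have hprod : ∀ (u : ℝ) (s : Fin n → ℝ),
      (∏ i, (saw (e.symm (u, s) i) : ℂ)) * F (x - ∑ i, e.symm (u, s) i)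
        = (saw u : ℂ) * ((∏ i, (saw (s i) : ℂ)) * F ((x - u) - ∑ i, s i)) := by
    intro u s
    rw [hsymm, Fin.insertNth_zero', Fin.prod_univ_succ, Fin.sum_univ_succ]
    simp only [Fin.cons_zero, Fin.cons_succ]
    rw [mul_assoc]
    congr 2
    ring_nf
  have hInt : Integrable (fun p : ℝ × (Fin n → ℝ) =>
      (∏ i, (saw (e.symm p i) : ℂ)) * F (x - ∑ i, e.symm p i)) (ν.prod (μn n)) := by
    refine Integrable.mono' (integrable_const C) ?_ ?_
    · exact ((measurable_prodsaw (n+1) hF x).comp e.symm.measurable).aestronglyMeasurable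
    · filter_upwards with p
      exact norm_prodsaw_le (n+1) hC x (e.symm p)
  rw [MeasureTheory.integral_prod _ hInt]
  apply integral_congr_ae
  filter_upwards with u
  simp only [hprod]
  rw [MeasureTheory.integral_const_mul]

/-- The key induction: the cube integral with a final sawtooth factor is `g`. -/
lemma cube_integral_eq_g : ∀ (n : ℕ) (x : ℝ),
    ∫ t, (∏ i, (saw (t i) : ℂ)) * (saw (x - ∑ i, t i) : ℂ) ∂μn (n + 1) = g (n + 2) x := by
  intro n
  induction n with
  | zero =>
    intro x
    have hsaw : Measurable fun y : ℝ => (saw y : ℂ) :=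
      Complex.measurable_ofReal.comp measurable_saw
    have hbound : ∀ y : ℝ, ‖(saw y : ℂ)‖ ≤ 1 := by
      intro y
      rw [Complex.norm_real, Real.norm_eq_abs]
      linarith [abs_saw_le y]
    rw [peel 0 hsaw hbound x]
    have hinner : ∀ u : ℝ,
        (∫ s, (∏ i, (saw (s i) : ℂ)) * (saw ((x - u) - ∑ i, s i) : ℂ) ∂μn 0)
          = (saw (x - u) : ℂ) := by
      intro u
      have : ∀ s : Fin 0 → ℝ,
          (∏ i, (saw (s i) : ℂ)) * (saw ((x - u) - ∑ i, s i) : ℂ) = (saw (x - u) : ℂ) := by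
        intro s
        simp
      simp only [this]
      rw [integral_const, probReal_univ, one_smul]
    simp only [hinner]
    exact conv_complex x
  | succ m ih =>
    intro x
    have hsaw : Measurable fun y : ℝ => (saw y : ℂ) :=
      Complex.measurable_ofReal.comp measurable_saw
    have hbound : ∀ y : ℝ, ‖(saw y : ℂ)‖ ≤ 1 := by
      intro y
      rw [Complex.norm_real, Real.norm_eq_abs]
      linarith [abs_saw_le y]
    rw [peel (m + 1) hsaw hbound x]
    have hinner : ∀ u : ℝ,
        (∫ s, (∏ i, (saw (s i) : ℂ)) * (saw ((x - u) - ∑ i, s i) : ℂ) ∂μn (m + 1))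
          = g (m + 2) (x - u) := fun u => ih (x - u)
    simp only [hinner]
    exact integral_saw_g (by omega) x

lemma restrict_cube (m : ℕ) :
    (volume : Measure (Fin m → ℝ)).restrict (Set.univ.pi fun _ => Set.Icc (0:ℝ) 1) = μn m := by
  rw [μn]
  refine (Measure.pi_eq fun s hs => ?_).symm
  rw [Measure.restrict_apply (MeasurableSet.univ_pi hs), ← Set.pi_inter_distrib, volume_pi_pi]
  exact Finset.prod_congr rfl fun i _ => (Measure.restrict_apply (hs i)).symm

lemma g_apply_zero (K : ℕ) : g K 0 = ∑' n : ℤ, c n ^ K := by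
  rw [g]
  apply tsum_congr
  intro n
  rw [fexp]
  norm_num

lemma tsum_antisym_zero {f : ℤ → ℂ} (h : ∀ n, f (-n) = - f n) : ∑' n, f n = 0 := by
  have h1 : ∑' n : ℤ, f (-n) = ∑' n : ℤ, f n := (Equiv.neg ℤ).tsum_eq f
  have h2 : ∑' n : ℤ, f (-n) = - ∑' n : ℤ, f n := by
    calc ∑' n : ℤ, f (-n) = ∑' n : ℤ, - f n := tsum_congr h
      _ = - ∑' n : ℤ, f n := tsum_neg
  have h3 := h1.symm.trans h2
  linear_combination h3 / 2

lemma c_neg (n : ℤ) : c (-n) = - c n := by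
  rcases eq_or_ne n 0 with rfl | hn
  · simp [c]
  · rw [c, c, if_neg hn, if_neg (neg_ne_zero.mpr hn)]
    have h1 : ((n:ℂ)) ≠ 0 := Int.cast_ne_zero.mpr hn
    have h2 := two_pi_I_int_ne n hn
    push_cast
    field_simp

lemma c_pow_eq (K : ℕ) (hK : K ≠ 0) (n : ℤ) :
    c n ^ K = (-1 : ℂ) ^ K * (if n = 0 then 0 else 1 / (2 * (π:ℂ) * Complex.I * n) ^ K) := by
  rcases eq_or_ne n 0 with rfl | hn
  · simp [c, zero_pow hK]
  · rw [c, if_neg hn, if_neg hn, neg_div, neg_pow, div_pow, one_pow]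

end WheelAux

/-- The `k`-gon wheel integral of sawtooth propagators equals
`∑_{n≠0} (2πin)^{−k}`, i.e. `2ζ(k)/(2πi)^k` for even `k` and `0` for odd `k`. -/
theorem wheel_integral_zeta (k : ℕ) (hk : 2 ≤ k) :
    ((((∫ t in (Set.univ.pi fun _ : Fin (k - 1) => Set.Icc (0 : ℝ) 1),
          (∏ i, saw (t i)) * saw (- ∑ i, t i)) : ℝ) : ℂ)
        = ∑' n : ℤ, (if n = 0 then 0 else 1 / (2 * Real.pi * Complex.I * n) ^ k)) ∧
    ((((∫ t in (Set.univ.pi fun _ : Fin (k - 1) => Set.Icc (0 : ℝ) 1),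
          (∏ i, saw (t i)) * saw (- ∑ i, t i)) : ℝ) : ℂ)
        = if Even k then 2 * riemannZeta k / (2 * Real.pi * Complex.I) ^ k else 0) := by
  classical
  obtain ⟨m, rfl⟩ : ∃ m, k = m + 2 := ⟨k - 2, by omega⟩
  set K := m + 2 with hKdef
  have hK0 : K ≠ 0 := by omega
  have hK2 : 2 ≤ K := by omega
  -- Step 1: the integral equals `g K 0`.
  have hI : (((∫ t in (Set.univ.pi fun _ : Fin (K - 1) => Set.Icc (0 : ℝ) 1),
      (∏ i, saw (t i)) * saw (- ∑ i, t i)) : ℝ) : ℂ) = WheelAux.g K 0 := by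
    have hlift : (((∫ t in (Set.univ.pi fun _ : Fin (K - 1) => Set.Icc (0 : ℝ) 1),
        (∏ i, saw (t i)) * saw (- ∑ i, t i)) : ℝ) : ℂ)
          = ∫ t in (Set.univ.pi fun _ : Fin (K - 1) => Set.Icc (0 : ℝ) 1),
            (((∏ i, saw (t i)) * saw (- ∑ i, t i) : ℝ) : ℂ) := integral_ofReal.symm
    rw [hlift]
    have hcast : ∀ t : Fin (K - 1) → ℝ,
        (((∏ i, saw (t i)) * saw (- ∑ i, t i) : ℝ) : ℂ)
          = (∏ i, (saw (t i) : ℂ)) * (saw ((0 : ℝ) - ∑ i, t i) : ℂ) := by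
      intro t
      rw [zero_sub]
      push_cast
      ring
    simp only [hcast]
    rw [WheelAux.restrict_cube (K - 1)]
    exact WheelAux.cube_integral_eq_g m 0
  rw [hI, WheelAux.g_apply_zero]
  have hterm : ∀ n : ℤ, WheelAux.c n ^ K
      = (-1 : ℂ) ^ K * (if n = 0 then 0 else 1 / (2 * (Real.pi : ℂ) * Complex.I * n) ^ K) :=
    WheelAux.c_pow_eq K hK0
  -- antisymmetry of the target summand for odd K
  have hodd_f : Odd K → ∀ n : ℤ,
      (if -n = 0 then 0 else 1 / (2 * (Real.pi : ℂ) * Complex.I * (-n : ℤ)) ^ K)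
        = -(if n = 0 then 0 else 1 / (2 * (Real.pi : ℂ) * Complex.I * n) ^ K) := by
    intro hod n
    rcases eq_or_ne n 0 with rfl | hn
    · simp
    · rw [if_neg (neg_ne_zero.mpr hn), if_neg hn,
        show (2 * (Real.pi : ℂ) * Complex.I * ((-n : ℤ) : ℂ))
          = -(2 * (Real.pi : ℂ) * Complex.I * (n : ℂ)) by push_cast; ring,
        hod.neg_pow, div_neg]
  -- Step 2: part 1.
  have hpart1 : (∑' n : ℤ, WheelAux.c n ^ K)
      = ∑' n : ℤ, (if n = 0 then 0 else 1 / (2 * (Real.pi : ℂ) * Complex.I * n) ^ K) := by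
    rcases Nat.even_or_odd K with hev | hod
    · apply tsum_congr
      intro n
      rw [hterm n, hev.neg_one_pow, one_mul]
    · have hc0 : (∑' n : ℤ, WheelAux.c n ^ K) = 0 :=
        WheelAux.tsum_antisym_zero (fun n => by rw [WheelAux.c_neg, hod.neg_pow])
      have hf0 : (∑' n : ℤ,
          (if n = 0 then 0 else 1 / (2 * (Real.pi : ℂ) * Complex.I * n) ^ K)) = 0 :=
        WheelAux.tsum_antisym_zero (hodd_f hod)
      rw [hc0, hf0]
  refine ⟨hpart1, hpart1.trans ?_⟩
  -- Step 3: evaluate the sum.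
  rcases Nat.even_or_odd K with hev | hod
  · rw [if_pos hev]
    have hA : (2 * (Real.pi : ℂ) * Complex.I) ^ K ≠ 0 :=
      pow_ne_zero _ Complex.two_pi_I_ne_zero
    have hfe : ∀ n : ℤ, (if n = 0 then 0 else 1 / (2 * (Real.pi : ℂ) * Complex.I * n) ^ K)
        = (1 / (2 * (Real.pi : ℂ) * Complex.I) ^ K) * (1 / (n : ℂ) ^ K) := by
      intro n
      rcases eq_or_ne n 0 with rfl | hn
      · rw [if_pos rfl, Int.cast_zero, zero_pow hK0, div_zero, mul_zero]
      · rw [if_neg hn,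
          show (2 * (Real.pi : ℂ) * Complex.I * (n : ℂ)) ^ K
            = (2 * (Real.pi : ℂ) * Complex.I) ^ K * (n : ℂ) ^ K by rw [← mul_pow],
          one_div_mul_one_div]
    simp only [hfe]
    rw [tsum_mul_left]
    -- the symmetric zeta sum
    have hζsummable : Summable fun n : ℕ => 1 / (n : ℂ) ^ K := by
      apply Summable.of_norm
      have hn : ∀ n : ℕ, ‖1 / (n : ℂ) ^ K‖ = 1 / (n : ℝ) ^ K := by
        intro n
        rw [norm_div, norm_one, norm_pow, Complex.norm_natCast]
      simp only [hn]
      exact Real.summable_one_div_nat_pow.mpr (by omega)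
    have hζ1 : HasSum (fun n : ℕ => 1 / (n : ℂ) ^ K) (riemannZeta K) :=
      hζsummable.hasSum_iff.mpr (zeta_nat_eq_tsum_of_gt_one (by omega)).symm
    have hζ2 : HasSum (fun n : ℕ => 1 / ((n : ℂ) + 1) ^ K) (riemannZeta K) := by
      have h2 := (hasSum_nat_add_iff' (f := fun n : ℕ => 1 / (n : ℂ) ^ K) 1).mpr hζ1
      simp only [Finset.range_one, Finset.sum_singleton, Nat.cast_zero, zero_pow hK0,
        div_zero, sub_zero] at h2
      have hfe2 : (fun n : ℕ => 1 / ((n : ℂ) + 1) ^ K)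
          = fun n : ℕ => 1 / (((n + 1 : ℕ) : ℕ) : ℂ) ^ K := by
        funext n
        push_cast
        ring_nf
      rw [hfe2]
      exact h2
    have hsz : Summable fun n : ℤ => 1 / (n : ℂ) ^ K := by
      apply Summable.of_norm
      have hn : ∀ n : ℤ, ‖1 / (n : ℂ) ^ K‖ = |1 / (n : ℝ) ^ K| := by
        intro n
        rw [norm_div, norm_one, norm_pow, Complex.norm_intCast,
          abs_div, abs_one, _root_.abs_pow]
      simp only [hn]
      exact (Real.summable_one_div_int_pow.mpr (by omega)).abs
    have hint := hsz.hasSum.nat_add_neg_add_one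
    have heq : (fun n : ℕ => 1 / ((n : ℤ) : ℂ) ^ K + 1 / ((-((n : ℤ) + 1) : ℤ) : ℂ) ^ K)
        = fun n : ℕ => 1 / (n : ℂ) ^ K + 1 / ((n : ℂ) + 1) ^ K := by
      funext n
      have h1 : (((n : ℤ)) : ℂ) = (n : ℂ) := by push_cast; rfl
      have h2 : ((-((n : ℤ) + 1) : ℤ) : ℂ) = -((n : ℂ) + 1) := by push_cast; ring
      rw [h1, h2, hev.neg_pow]
    rw [heq] at hint
    have hzval : (∑' n : ℤ, 1 / (n : ℂ) ^ K) = riemannZeta K + riemannZeta K :=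
      hint.unique (hζ1.add hζ2)
    rw [hzval]
    have hKcast : ((K : ℕ) : ℂ) = (K : ℂ) := rfl
    field_simp
    ring
  · rw [if_neg (by simpa using hod)]
    exact WheelAux.tsum_antisym_zero (hodd_f hod)
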